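/- Let k be a field, G a finite group, R a fully G-graded k-algebra, H a subgroup of G, and g, h ∈ G. Write ʰH := hHh⁻¹ and ᵍʰH := (gh)H(gh)⁻¹. Then the map induced by multiplication in R gives an isomorphism R_{[g(ʰH)]} ⊗_{R_{[ʰH]}} R_{[hH]} ≅ R_{[ghH]} of R_{[ᵍʰH]}–R_H-bimodules; in particular the k-linear map r₁ ⊗ r₂ ↦ r₁r₂ from R_{[g(ʰH)]} ⊗_{R_{[ʰH]}} R_{[hH]} to R_{[ghH]} is bijective. -/

import Mathlib

/-!
Formalization of statements about fully group-graded algebras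
(Coconeț–Todea, "Hochschild cohomology of fully group-graded algebras as Mackey functor").
-/

set_option linter.unusedSectionVars false

open scoped Pointwise TensorProduct

/-- A fully (= strongly) `G`-graded `k`-algebra structure on `R`: a family of `k`-subspaces
`𝒜 g` (`g ∈ G`) giving an internal direct sum decomposition `R = ⊕_{g ∈ G} R_g`, with the
unit of `R` lying in the identity component, and satisfying `R_g · R_h = R_{gh}` for all
`g, h ∈ G`. -/
structure IsFullyGraded {k G R : Type*} [Field k] [Group G] [DecidableEq G]
    [Ring R] [Algebra k R] (𝒜 : G → Submodule k R) : Prop where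
  internal : DirectSum.IsInternal 𝒜
  one_mem : (1 : R) ∈ 𝒜 1
  mul_eq : ∀ g h : G, 𝒜 g * 𝒜 h = 𝒜 (g * h)

variable {k G R : Type*} [Field k] [Group G] [DecidableEq G] [Ring R] [Algebra k R]

/-- For a subset `S ⊆ G`, the `k`-subspace `R_{[S]} = ⊕_{s ∈ S} R_s` of `R`. -/
def gradedPart (𝒜 : G → Submodule k R) (S : Set G) : Submodule k R :=
  ⨆ s : S, 𝒜 (s : G)

theorem le_gradedPart (𝒜 : G → Submodule k R) {S : Set G} {s : G} (hs : s ∈ S) :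
    𝒜 s ≤ gradedPart 𝒜 S :=
  le_iSup (fun t : S => 𝒜 (t : G)) ⟨s, hs⟩

theorem gradedPart_mono (𝒜 : G → Submodule k R) {S T : Set G} (hST : S ⊆ T) :
    gradedPart 𝒜 S ≤ gradedPart 𝒜 T :=
  iSup_le fun s => le_gradedPart 𝒜 (hST s.2)

theorem gradedPart_mul_le (𝒜 : G → Submodule k R)
    (hmul : ∀ g h : G, 𝒜 g * 𝒜 h ≤ 𝒜 (g * h)) (S T : Set G) :
    gradedPart 𝒜 S * gradedPart 𝒜 T ≤ gradedPart 𝒜 (S * T) := by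
  rw [gradedPart, Submodule.iSup_mul]
  refine iSup_le fun s => ?_
  rw [gradedPart, Submodule.mul_iSup]
  refine iSup_le fun t => ?_
  exact le_trans (hmul s t) (le_gradedPart 𝒜 (Set.mul_mem_mul s.2 t.2))

/-- The conjugate subgroup `ᵍH = g H g⁻¹` (an element `x` lies in it iff `g⁻¹ x g ∈ H`). -/
def conjSubgroup (g : G) (H : Subgroup G) : Subgroup G where
  carrier := {x : G | g⁻¹ * x * g ∈ H}
  one_mem' := by simp [H.one_mem]
  mul_mem' {a b} ha hb := by
    have h1 : (g⁻¹ * a * g) * (g⁻¹ * b * g) ∈ H := H.mul_mem ha hb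
    rwa [show (g⁻¹ * a * g) * (g⁻¹ * b * g) = g⁻¹ * (a * b) * g by group] at h1
  inv_mem' {a} ha := by
    have h1 : (g⁻¹ * a * g)⁻¹ ∈ H := H.inv_mem ha
    rwa [show (g⁻¹ * a * g)⁻¹ = g⁻¹ * a⁻¹ * g by group] at h1

theorem mem_conjSubgroup (g : G) (H : Subgroup G) (x : G) :
    x ∈ conjSubgroup g H ↔ g⁻¹ * x * g ∈ H := Iff.rfl

theorem conjSubgroup_coe (g : G) (H : Subgroup G) :
    (conjSubgroup g H : Set G) = {g} * (H : Set G) * {g⁻¹} := by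
  ext x
  simp only [SetLike.mem_coe, mem_conjSubgroup, Set.mem_mul, Set.mem_singleton_iff]
  constructor
  · intro hx
    refine ⟨g * (g⁻¹ * x * g), ⟨g, rfl, g⁻¹ * x * g, hx, rfl⟩, g⁻¹, rfl, by group⟩
  · rintro ⟨y, ⟨a, ha, b, hb, hy⟩, c, hc, hx⟩
    rw [← hx, ← hy, ha, hc]
    have h2 : g⁻¹ * (g * b * g⁻¹) * g = b := by group
    rwa [h2]

/-- The `k`-linear map `↥A ⊗[k] ↥B → R` induced by multiplication in `R`. -/
noncomputable def mulTensor (A B : Submodule k R) : (↥A ⊗[k] ↥B) →ₗ[k] R :=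
  TensorProduct.lift
    (LinearMap.mk₂ k (fun (a : ↥A) (b : ↥B) => (a : R) * (b : R))
      (fun a₁ a₂ b => by simp [add_mul])
      (fun c a b => by simp [smul_mul_assoc])
      (fun a b₁ b₂ => by simp [mul_add])
      (fun c a b => by simp [mul_smul_comm]))

@[simp] theorem mulTensor_tmul (A B : Submodule k R) (a : ↥A) (b : ↥B) :
    mulTensor A B (a ⊗ₜ[k] b) = (a : R) * (b : R) := rfl

/-- The `k`-submodule of `↥A ⊗[k] ↥B` spanned by the balancedness relations over a middle
`k`-submodule `D` of `R` (with `D` acting by multiplication in `R`): the corresponding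
quotient is the balanced tensor product `A ⊗_D B`. -/
noncomputable def balancedRel (A B D : Submodule k R) : Submodule k (↥A ⊗[k] ↥B) :=
  Submodule.span k
    {z : ↥A ⊗[k] ↥B | ∃ (a : ↥A) (d : ↥D) (b : ↥B) (a' : ↥A) (b' : ↥B),
      (a' : R) = (a : R) * (d : R) ∧ ((b' : R) = (d : R) * (b : R)) ∧
      z = a' ⊗ₜ[k] b - a ⊗ₜ[k] b'}

/-- The balanced tensor product `A ⊗_D B`, realised as a quotient of `↥A ⊗[k] ↥B`. -/
noncomputable abbrev balancedTensor (A B D : Submodule k R) : Type _ :=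
  @HasQuotient.Quotient _ _ (@Submodule.hasQuotient k (↥A ⊗[k] ↥B) _ _ _) (balancedRel A B D)

/-- The `k`-linear map `A ⊗_D B → R`, `r₁ ⊗ r₂ ↦ r₁ r₂`, induced by multiplication in `R`
on the balanced tensor product. -/
noncomputable def mulQuot (A B D : Submodule k R) : balancedTensor A B D →ₗ[k] R :=
  Submodule.liftQ _ (mulTensor A B)
    (by
      rw [balancedRel, Submodule.span_le]
      rintro z ⟨a, d, b, a', b', ha', hb', rfl⟩
      simp only [SetLike.mem_coe, LinearMap.mem_ker, map_sub, mulTensor_tmul, ha', hb']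
      rw [mul_assoc, sub_self])

theorem gradedPart_singleton (𝒜 : G → Submodule k R) (a : G) :
    gradedPart 𝒜 ({a} : Set G) = 𝒜 a :=
  le_antisymm (iSup_le fun s => by obtain ⟨s, hs⟩ := s; cases hs; exact le_rfl)
    (le_gradedPart 𝒜 rfl)

theorem range_mulTensor (A B : Submodule k R) :
    LinearMap.range (mulTensor A B) = A * B := by
  apply le_antisymm
  · rintro x ⟨z, rfl⟩
    induction z using TensorProduct.induction_on with
    | zero => simpa using (A * B).zero_mem
    | tmul a b => exact Submodule.mul_mem_mul a.2 b.2
    | add z w hz hw => rw [map_add]; exact (A * B).add_mem hz hw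
  · exact Submodule.mul_le.2 fun a ha b hb => ⟨⟨a, ha⟩ ⊗ₜ ⟨b, hb⟩, rfl⟩

theorem multiset_sum_apply' {ι M N : Type*} [AddCommMonoid M] [AddCommMonoid N]
    [Module k M] [Module k N] (s : Multiset ι) (f : ι → M →ₗ[k] N) (x : M) :
    (s.map f).sum x = (s.map fun i => f i x).sum := by
  induction s using Multiset.induction with
  | empty => simp
  | cons a s ih => simp [ih]

/-- Left multiplication by a fixed element, restricted between submodules. -/
noncomputable def mulLeftRestrict (v : R) (S T : Submodule k R)
    (h : ∀ x ∈ S, v * x ∈ T) : ↥S →ₗ[k] ↥T where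
  toFun x := ⟨v * x, h x x.2⟩
  map_add' x y := by ext; simp [mul_add]
  map_smul' c x := by ext; simp [mul_smul_comm]

theorem subgroup_coe_mul_self (K : Subgroup G) : (K : Set G) * K = K := by
  simpa using Submonoid.coe_mul_self_eq K.toSubmonoid

theorem singleton_inv_mul_cancel (a : G) (S : Set G) :
    ({a⁻¹} : Set G) * ({a} * S) = S := by
  rw [← mul_assoc, Set.singleton_mul_singleton, inv_mul_cancel, Set.singleton_one, one_mul]

set_option maxHeartbeats 1000000 in
/-- Let `k` be a field, `G` a finite group, `R` a fully `G`-graded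
`k`-algebra, `H ≤ G` and `g, h ∈ G`; write `ʰH = h H h⁻¹`.  Then multiplication in `R`
induces an isomorphism `R_{[g(ʰH)]} ⊗_{R_{[ʰH]}} R_{[hH]} ≅ R_{[ghH]}` of
`R_{[ᵍʰH]}`–`R_H`-bimodules; in particular the `k`-linear map `r₁ ⊗ r₂ ↦ r₁ r₂` on the
balanced tensor product is injective with image exactly `R_{[ghH]}`. -/
theorem mulQuot_conj_coset_bijective [Finite G]
    {𝒜 : G → Submodule k R} (hR : IsFullyGraded 𝒜) (H : Subgroup G) (g h : G) :
    Function.Injective (mulQuot (gradedPart 𝒜 ({g} * (conjSubgroup h H : Set G)))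
      (gradedPart 𝒜 ({h} * (H : Set G))) (gradedPart 𝒜 (conjSubgroup h H : Set G))) ∧
    LinearMap.range (mulQuot (gradedPart 𝒜 ({g} * (conjSubgroup h H : Set G)))
        (gradedPart 𝒜 ({h} * (H : Set G))) (gradedPart 𝒜 (conjSubgroup h H : Set G))) =
      gradedPart 𝒜 ({g * h} * (H : Set G)) := by
  classical
  set N : Set G := (conjSubgroup h H : Set G) with hNdef
  set A := gradedPart 𝒜 ({g} * N) with hAdef
  set B := gradedPart 𝒜 ({h} * (H : Set G)) with hBdef
  set D := gradedPart 𝒜 N with hDdef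
  set C := gradedPart 𝒜 ({g * h} * (H : Set G)) with hCdef
  have hmul : ∀ a b : G, 𝒜 a * 𝒜 b ≤ 𝒜 (a * b) := fun a b => (hR.mul_eq a b).le
  -- Set-level identities
  have hNset : N = {h} * (H : Set G) * {h⁻¹} := conjSubgroup_coe h H
  have hHH : (H : Set G) * H = H := subgroup_coe_mul_self H
  have hNN : N * N = N := subgroup_coe_mul_self (conjSubgroup h H)
  have hset4 : N * ({h} * (H : Set G)) = {h} * (H : Set G) := by
    rw [hNset, mul_assoc ({h} * (H : Set G)) {h⁻¹}, singleton_inv_mul_cancel,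
      mul_assoc, hHH]
  have hset1 : ({g} * N) * ({h} * (H : Set G)) = {g * h} * (H : Set G) := by
    rw [mul_assoc, hset4, ← mul_assoc, Set.singleton_mul_singleton]
  have hset2 : ({g⁻¹} : Set G) * ({g * h} * (H : Set G)) = {h} * (H : Set G) := by
    rw [← mul_assoc, Set.singleton_mul_singleton, show g⁻¹ * (g * h) = h by group]
  have hset3 : ({g⁻¹} : Set G) * ({g} * N) = N := singleton_inv_mul_cancel g N
  -- Submodule-level inclusions
  have h𝒜gA : 𝒜 g ≤ A :=
    le_gradedPart 𝒜 (by
      simpa using Set.mul_mem_mul (Set.mem_singleton g)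
        (show (1 : G) ∈ N from (conjSubgroup h H).one_mem))
  have hAB : A * B ≤ C :=
    le_trans (gradedPart_mul_le 𝒜 hmul _ _) (le_of_eq (by rw [hset1, hCdef]))
  have hinvC : 𝒜 g⁻¹ * C ≤ B := by
    calc 𝒜 g⁻¹ * C
        = gradedPart 𝒜 {g⁻¹} * gradedPart 𝒜 ({g * h} * (H : Set G)) := by
          rw [gradedPart_singleton, hCdef]
      _ ≤ gradedPart 𝒜 (({g⁻¹} : Set G) * ({g * h} * (H : Set G))) :=
          gradedPart_mul_le 𝒜 hmul _ _
      _ = B := by rw [hset2, hBdef]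
  have hinvA : 𝒜 g⁻¹ * A ≤ D := by
    calc 𝒜 g⁻¹ * A
        = gradedPart 𝒜 {g⁻¹} * gradedPart 𝒜 ({g} * N) := by
          rw [gradedPart_singleton, hAdef]
      _ ≤ gradedPart 𝒜 (({g⁻¹} : Set G) * ({g} * N)) := gradedPart_mul_le 𝒜 hmul _ _
      _ = D := by rw [hset3, hDdef]
  have hgD : 𝒜 g * D ≤ A := by
    calc 𝒜 g * D = gradedPart 𝒜 {g} * gradedPart 𝒜 N := by rw [gradedPart_singleton, hDdef]
      _ ≤ gradedPart 𝒜 (({g} : Set G) * N) := gradedPart_mul_le 𝒜 hmul _ _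
      _ ≤ A := le_of_eq hAdef.symm
  have hC_le : C ≤ A * B := by
    rw [hCdef]
    refine iSup_le fun s => ?_
    obtain ⟨s, hsmem⟩ := s
    rw [Set.mem_mul] at hsmem
    obtain ⟨a, ha, b, hb, rfl⟩ := hsmem
    rw [Set.mem_singleton_iff] at ha
    subst ha
    show 𝒜 ((g * h) * b) ≤ A * B
    rw [mul_assoc, ← hR.mul_eq]
    exact mul_le_mul' h𝒜gA
      (le_gradedPart 𝒜 (Set.mul_mem_mul (Set.mem_singleton h) hb))
  have hABeq : A * B = C := le_antisymm hAB hC_le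
  have hrange : LinearMap.range (mulQuot A B D) = C := by
    have h1 : LinearMap.range (mulQuot A B D) = LinearMap.range (mulTensor A B) :=
      Submodule.range_liftQ _ _ _
    rw [h1, range_mulTensor]
    exact hABeq
  refine ⟨?_, hrange⟩
  -- Injectivity.  Decompose `1 = ∑ uᵢvᵢ` with `uᵢ ∈ 𝒜 g`, `vᵢ ∈ 𝒜 g⁻¹`.
  obtain ⟨s, hs⟩ : ∃ s : Multiset (↥(𝒜 g) × ↥(𝒜 g⁻¹)),
      (s.map fun p => ((p.1 : R) * (p.2 : R))).sum = 1 := by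
    have h1 : (1 : R) ∈ 𝒜 g * 𝒜 g⁻¹ := by rw [hR.mul_eq, mul_inv_cancel]; exact hR.one_mem
    refine Submodule.mul_induction_on h1
      (fun m hm n hn => ⟨{(⟨m, hm⟩, ⟨n, hn⟩)}, by simp⟩) ?_
    rintro x y ⟨sx, hx⟩ ⟨sy, hy⟩
    exact ⟨sx + sy, by rw [Multiset.map_add, Multiset.sum_add, hx, hy]⟩
  have hmemC : ∀ t : ↥A ⊗[k] ↥B, mulTensor A B t ∈ C := by
    intro t
    rw [← hABeq, ← range_mulTensor]
    exact ⟨t, rfl⟩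
  set F : (↥(𝒜 g) × ↥(𝒜 g⁻¹)) → ↥C →ₗ[k] balancedTensor A B D := fun p =>
    (Submodule.mkQ _ : (↥A ⊗[k] ↥B) →ₗ[k] balancedTensor A B D).comp
      ((TensorProduct.mk k ↥A ↥B ⟨(p.1 : R), h𝒜gA p.1.2⟩).comp
        (mulLeftRestrict (p.2 : R) C B fun x hx =>
          hinvC (Submodule.mul_mem_mul p.2.2 hx))) with hF
  set ψ : ↥C →ₗ[k] balancedTensor A B D := (s.map F).sum with hψ
  have main : ∀ t : ↥A ⊗[k] ↥B,
      ψ ⟨mulTensor A B t, hmemC t⟩ = Submodule.Quotient.mk t := by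
    intro t
    induction t using TensorProduct.induction_on with
    | zero =>
      rw [show (⟨mulTensor A B 0, hmemC 0⟩ : ↥C) = 0 from Subtype.ext (map_zero _),
        map_zero]
      rfl
    | add t₁ t₂ h₁ h₂ =>
      rw [show (⟨mulTensor A B (t₁ + t₂), hmemC _⟩ : ↥C)
            = ⟨mulTensor A B t₁, hmemC t₁⟩ + ⟨mulTensor A B t₂, hmemC t₂⟩ from
          Subtype.ext (map_add _ t₁ t₂), map_add, h₁, h₂]
      rfl
    | tmul x y =>
      set c : ↥C := ⟨mulTensor A B (x ⊗ₜ y), hmemC _⟩ with hc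
      have hcval : (c : R) = (x : R) * (y : R) := rfl
      set L : ↥A →ₗ[k] balancedTensor A B D :=
        (Submodule.mkQ _ : (↥A ⊗[k] ↥B) →ₗ[k] balancedTensor A B D).comp ((TensorProduct.mk k ↥A ↥B).flip y) with hL
      set ap : (↥(𝒜 g) × ↥(𝒜 g⁻¹)) → ↥A := fun p =>
        ⟨(p.1 : R) * ((p.2 : R) * (x : R)),
          hgD (Submodule.mul_mem_mul p.1.2
            (hinvA (Submodule.mul_mem_mul p.2.2 x.2)))⟩ with hap
      have hstep : ∀ p, F p c = L (ap p) := by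
        intro p
        rw [hF, hL, hap]
        simp only [LinearMap.comp_apply, TensorProduct.mk_apply, LinearMap.flip_apply,
          Submodule.mkQ_apply]
        refine ((Submodule.Quotient.eq _).2 ?_).symm
        refine Submodule.subset_span
          ⟨⟨(p.1 : R), h𝒜gA p.1.2⟩,
            ⟨(p.2 : R) * (x : R), hinvA (Submodule.mul_mem_mul p.2.2 x.2)⟩, y,
            _, _, rfl, ?_, rfl⟩
        show (p.2 : R) * (c : R) = ((p.2 : R) * (x : R)) * (y : R)
        rw [hcval, mul_assoc]
      have hasum : (s.map ap).sum = x := by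
        apply Subtype.ext
        have h1 : ((s.map ap).sum : R) = ((s.map ap).map A.subtype).sum :=
          map_multiset_sum A.subtype _
        rw [h1, Multiset.map_map]
        have h2 : ∀ p ∈ s, (A.subtype ∘ ap) p = ((p.1 : R) * (p.2 : R)) * (x : R) := by
          intro p _
          show (p.1 : R) * ((p.2 : R) * (x : R)) = _
          rw [mul_assoc]
        rw [Multiset.map_congr rfl h2, Multiset.sum_map_mul_right, hs, one_mul]
      calc ψ c = (s.map fun p => F p c).sum := by rw [hψ, multiset_sum_apply']
        _ = (s.map fun p => L (ap p)).sum := by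
            rw [Multiset.map_congr rfl fun p _ => hstep p]
        _ = ((s.map ap).map L).sum := by rw [Multiset.map_map]; rfl
        _ = L (s.map ap).sum := (map_multiset_sum L _).symm
        _ = L x := by rw [hasum]
        _ = Submodule.Quotient.mk (x ⊗ₜ y) := rfl
  intro z w hzw
  obtain ⟨t, rfl⟩ := Submodule.mkQ_surjective _ z
  obtain ⟨t', rfl⟩ := Submodule.mkQ_surjective _ w
  have hzw' : mulTensor A B t = mulTensor A B t' := by
    simpa [mulQuot, Submodule.mkQ_apply] using hzw
  have heq : (⟨mulTensor A B t, hmemC t⟩ : ↥C) = ⟨mulTensor A B t', hmemC t'⟩ :=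
    Subtype.ext hzw'
  show Submodule.Quotient.mk t = Submodule.Quotient.mk t'
  rw [← main t, ← main t', heq]
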